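/- Suppose continuous functions $\widetilde K_i$, $i \in V$, on $\mathbb{R}^N_{>0}$ satisfy: whenever $r_i$ is minimal and $r_p$ is maximal among the coordinates of $r$, one has $\widetilde K_p - \widetilde K_i \geq 0$ (equivalently the sum of extended solid angles at $i$ exceeds that at $p$). Then along any solution of $r_m' = (\tilde\lambda - \widetilde K_m) r_m$, the function $t \mapsto \min_{p,q} r_p(t)/r_q(t)$ is non-decreasing; consequently there exists $c > 1$ with $c^{-1} r_p(t) \leq r_q(t) \leq c\, r_p(t)$ for all $t \geq 0$ and all $p,q$. -/

import Mathlib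

open Filter Set Finset Topology

-- inf' as negated sup'
lemma aux_inf'_neg {ι : Type*} (s : Finset ι) (hs : s.Nonempty) (f : ι → ℝ) :
    s.inf' hs f = -s.sup' hs (fun m => -f m) := by
  refine le_antisymm ?_ (Finset.le_inf' _ _ fun m hm => ?_)
  · rw [le_neg]
    exact Finset.sup'_le _ _ fun m hm => neg_le_neg (Finset.inf'_le f hm)
  · have := Finset.le_sup' (fun m => -f m) hm
    linarith

lemma aux_sup_right_deriv {ι : Type*} [Fintype ι] [Nonempty ι]
    (f : ι → ℝ → ℝ) (d : ι → ℝ) (x : ℝ)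
    (hder : ∀ m, HasDerivAt (f m) (d m) x) :
    ∃ q, (∀ m, f m x ≤ f q x) ∧
      HasDerivWithinAt (fun z => Finset.univ.sup' Finset.univ_nonempty fun m => f m z)
        (d q) (Set.Ioi x) x := by
  classical
  set c := Finset.univ.sup' Finset.univ_nonempty (fun m => f m x) with hc
  obtain ⟨q₁, -, hq₁⟩ := Finset.exists_mem_eq_sup' Finset.univ_nonempty (fun m => f m x)
  rw [← hc] at hq₁
  set A := Finset.univ.filter (fun m => f m x = c) with hA
  have hmemA : ∀ m, m ∈ A ↔ f m x = c := fun m => by simp [hA]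
  have hq₁A : q₁ ∈ A := (hmemA q₁).2 hq₁.symm
  have hAne : A.Nonempty := ⟨q₁, hq₁A⟩
  obtain ⟨q₀, hq₀A, hq₀⟩ := Finset.exists_mem_eq_sup' hAne d
  have hAx : A.sup' hAne (fun m => f m x) = c :=
    le_antisymm (Finset.sup'_le _ _ fun m hm => ((hmemA m).1 hm).le)
      (Finset.le_sup'_of_le _ hq₁A hq₁.le)
  refine ⟨q₀, fun m => ?_, ?_⟩
  · have h1 : f m x ≤ c := by rw [hc]; exact Finset.le_sup' (fun m => f m x) (Finset.mem_univ m)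
    rwa [← (hmemA q₀).1 hq₀A] at h1
  rw [← hq₀]
  have hstep : HasDerivWithinAt (fun z => A.sup' hAne fun m => f m z)
      (A.sup' hAne d) (Set.Ioi x) x := by
    rw [hasDerivWithinAt_iff_tendsto_slope' (Set.notMem_Ioi.2 le_rfl)]
    have hten := Filter.Tendsto.finset_sup'_nhds_apply (l := 𝓝[Set.Ioi x] x)
      (f := fun m z => slope (f m) x z) (g := d) hAne
      (fun m _ => (hasDerivWithinAt_iff_tendsto_slope'
        (Set.notMem_Ioi.2 le_rfl)).1 (hder m).hasDerivWithinAt)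
    refine hten.congr' ?_
    filter_upwards [self_mem_nhdsWithin] with z hz
    have hzx : (0:ℝ) < z - x := sub_pos.2 hz
    have hmono : Monotone (fun y : ℝ => (y - c) / (z - x)) := fun a b hab => by
      have h' : a - c ≤ b - c := by linarith
      exact div_le_div_of_nonneg_right h' hzx.le
    have hcomp' := Finset.comp_sup'_eq_sup'_comp (γ := ℝ) hAne (f := fun m => f m z)
      (fun y => (y - c) / (z - x)) (fun a b => hmono.map_max)
    have h1 : A.sup' hAne (fun m => slope (f m) x z)
        = A.sup' hAne (fun m => (f m z - c) / (z - x)) :=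
      Finset.sup'_congr hAne rfl fun m hm => by rw [slope_def_field, (hmemA m).1 hm]
    have key : slope (fun z => A.sup' hAne fun m => f m z) x z
        = A.sup' hAne fun m => (f m z - c) / (z - x) := by
      simp only [slope_def_field, hAx]
      simpa [Function.comp] using hcomp'
    rw [h1, key]
  have hev : (fun z => Finset.univ.sup' Finset.univ_nonempty fun m => f m z)
      =ᶠ[𝓝[Set.Ioi x] x] (fun z => A.sup' hAne fun m => f m z) := by
    have h1 : ∀ᶠ z in 𝓝 x, ∀ m, m ∉ A → f m z < f q₁ z := by
      rw [Filter.eventually_all]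
      intro m
      by_cases hm : m ∈ A
      · exact Filter.Eventually.of_forall fun z h => absurd hm h
      · have hlt : f m x < f q₁ x := by
          have h1 : f m x ≤ c := by
            rw [hc]; exact Finset.le_sup' (fun m => f m x) (Finset.mem_univ m)
          have h2 : f m x ≠ c := fun h => hm ((hmemA m).2 h)
          rw [← hq₁]; exact lt_of_le_of_ne h1 h2
        filter_upwards [ContinuousAt.eventually_lt (hder m).continuousAt
          (hder q₁).continuousAt hlt] with z hz _
        exact hz
    filter_upwards [h1.filter_mono nhdsWithin_le_nhds] with z hz
    refine le_antisymm (Finset.sup'_le _ _ fun m _ => ?_)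
      (Finset.sup'_mono _ (Finset.subset_univ A) hAne)
    by_cases hm : m ∈ A
    · exact Finset.le_sup' (fun m => f m z) hm
    · exact le_trans (hz m hm).le (Finset.le_sup' (fun m => f m z) hq₁A)
  exact hstep.congr_of_eventuallyEq hev (by rw [hAx, hc])

lemma aux_inf_right_deriv {ι : Type*} [Fintype ι] [Nonempty ι]
    (f : ι → ℝ → ℝ) (d : ι → ℝ) (x : ℝ)
    (hder : ∀ m, HasDerivAt (f m) (d m) x) :
    ∃ p, (∀ m, f p x ≤ f m x) ∧
      HasDerivWithinAt (fun z => Finset.univ.inf' Finset.univ_nonempty fun m => f m z)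
        (d p) (Set.Ioi x) x := by
  obtain ⟨q, hq1, hq2⟩ := aux_sup_right_deriv (fun m z => -(f m z)) (fun m => -(d m)) x
    (fun m => (hder m).neg)
  refine ⟨q, fun m => by have := hq1 m; linarith, ?_⟩
  have h1 : (fun z => Finset.univ.inf' Finset.univ_nonempty fun m => f m z)
      = fun z => -(Finset.univ.sup' Finset.univ_nonempty fun m => -(f m z)) := by
    funext z; exact aux_inf'_neg _ _ _
  rw [h1]
  have h := hq2.neg; simp only [neg_neg] at h; exact h
open Filter Set Finset Topology in
lemma aux_core (N : ℕ) (hne : (Finset.univ : Finset (Fin N)).Nonempty)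
    (K : (Fin N → ℝ) → Fin N → ℝ)
    (hcomp : ∀ x : Fin N → ℝ, (∀ m, 0 < x m) → ∀ i p : Fin N,
      (∀ m, x i ≤ x m) → (∀ m, x m ≤ x p) → 0 ≤ K x p - K x i)
    (r : ℝ → Fin N → ℝ) (hpos : ∀ t, 0 ≤ t → ∀ i, 0 < r t i)
    (hflow : ∀ t, 0 ≤ t → ∀ i, HasDerivAt (fun s => r s i)
      (((∑ j, K (r t) j * r t j) / (∑ j, r t j) - K (r t) i) * r t i) t)
    (a b : ℝ) (ha : 0 ≤ a) (hab : a ≤ b) :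
    Real.log (Finset.univ.sup' hne (r b)) - Real.log (Finset.univ.inf' hne (r b)) ≤
      Real.log (Finset.univ.sup' hne (r a)) - Real.log (Finset.univ.inf' hne (r a)) := by
  haveI : Nonempty (Fin N) := ⟨hne.choose⟩
  set g : ℝ → ℝ := fun t =>
    Real.log (Finset.univ.sup' hne (r t)) - Real.log (Finset.univ.inf' hne (r t)) with hg
  have hMpos : ∀ t, 0 ≤ t → 0 < Finset.univ.sup' hne (r t) := fun t ht =>
    lt_of_lt_of_le (hpos t ht hne.choose) (Finset.le_sup' (r t) (Finset.mem_univ _))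
  have hmpos : ∀ t, 0 ≤ t → 0 < Finset.univ.inf' hne (r t) := by
    intro t ht
    obtain ⟨p, -, hp⟩ := Finset.exists_mem_eq_inf' hne (r t)
    rw [hp]; exact hpos t ht p
  show g b ≤ g a
  have hgc : ContinuousOn g (Set.Icc a b) := by
    intro y hy
    have hy0 : 0 ≤ y := le_trans ha hy.1
    have hMc : ContinuousAt (fun t => Finset.univ.sup' hne (r t)) y :=
      Filter.Tendsto.finset_sup'_nhds_apply (f := fun m t => r t m) hne
        (fun m _ => (hflow y hy0 m).continuousAt)
    have hmc : ContinuousAt (fun t => Finset.univ.inf' hne (r t)) y :=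
      Filter.Tendsto.finset_inf'_nhds_apply (f := fun m t => r t m) hne
        (fun m _ => (hflow y hy0 m).continuousAt)
    exact ((hMc.log (hMpos y hy0).ne').sub (hmc.log (hmpos y hy0).ne')).continuousWithinAt
  have key : ∀ ε : ℝ, 0 < ε → g b ≤ g a + ε * (b - a) := by
    intro ε hε
    have hres := image_le_of_liminf_slope_right_le_deriv_boundary (f := g) (a := a) (b := b)
      hgc (B := fun t => g a + ε * (t - a)) (B' := fun _ => ε) (by simp)
      (by fun_prop)
      (fun x _ => by simpa using (((hasDerivWithinAt_id x (Set.Ici x)).sub_const a).const_mul ε).const_add (g a))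
      ?_ ⟨hab, le_rfl⟩
    · simpa using hres
    intro x hx ρ hρ
    have hx0 : 0 ≤ x := le_trans ha hx.1
    obtain ⟨q, hqmax, hqder⟩ := aux_sup_right_deriv (fun m z => r z m)
      (fun m => ((∑ j, K (r x) j * r x j) / (∑ j, r x j) - K (r x) m) * r x m) x
      (fun m => hflow x hx0 m)
    obtain ⟨p, hpmin, hpder⟩ := aux_inf_right_deriv (fun m z => r z m)
      (fun m => ((∑ j, K (r x) j * r x j) / (∑ j, r x j) - K (r x) m) * r x m) x
      (fun m => hflow x hx0 m)
    have hMx : Finset.univ.sup' hne (r x) = r x q :=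
      le_antisymm (Finset.sup'_le _ _ fun m _ => hqmax m) (Finset.le_sup' (r x) (Finset.mem_univ q))
    have hmx : Finset.univ.inf' hne (r x) = r x p :=
      le_antisymm (Finset.inf'_le (r x) (Finset.mem_univ p))
        (Finset.le_inf' _ _ fun m _ => hpmin m)
    have hlogM : HasDerivWithinAt (fun z => Real.log (Finset.univ.sup' hne (r z)))
        ((Finset.univ.sup' hne (r x))⁻¹ *
          (((∑ j, K (r x) j * r x j) / (∑ j, r x j) - K (r x) q) * r x q)) (Set.Ioi x) x :=
      by have h := (Real.hasDerivAt_log (hMpos x hx0).ne').comp_hasDerivWithinAt x hqder; exact h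
    have hlogm : HasDerivWithinAt (fun z => Real.log (Finset.univ.inf' hne (r z)))
        ((Finset.univ.inf' hne (r x))⁻¹ *
          (((∑ j, K (r x) j * r x j) / (∑ j, r x j) - K (r x) p) * r x p)) (Set.Ioi x) x :=
      by have h := (Real.hasDerivAt_log (hmpos x hx0).ne').comp_hasDerivWithinAt x hpder; exact h
    have hgder : HasDerivWithinAt g
        (((∑ j, K (r x) j * r x j) / (∑ j, r x j) - K (r x) q)
          - ((∑ j, K (r x) j * r x j) / (∑ j, r x j) - K (r x) p)) (Set.Ioi x) x := by
      have h2 := hlogM.sub hlogm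
      convert h2 using 1
      case e'_4 => rfl
      case e'_5 => rfl
      case e'_8 => rfl
      have h1 : r x q ≠ 0 := (hpos x hx0 q).ne'
      have h3 : r x p ≠ 0 := (hpos x hx0 p).ne'
      rw [hMx, hmx]
      field_simp
    have hle : ((∑ j, K (r x) j * r x j) / (∑ j, r x j) - K (r x) q)
        - ((∑ j, K (r x) j * r x j) / (∑ j, r x j) - K (r x) p) ≤ 0 := by
      have := hcomp (r x) (hpos x hx0) p q hpmin hqmax
      linarith
    have hslope := (hasDerivWithinAt_iff_tendsto_slope' (Set.notMem_Ioi.2 le_rfl)).1 hgder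
    exact (hslope.eventually_lt_const (lt_of_le_of_lt hle (lt_trans hε hρ))).frequently
  rcases eq_or_lt_of_le hab with rfl | hlt
  · exact le_rfl
  refine le_of_forall_pos_le_add fun δ hδ => ?_
  have h := key (δ / (b - a)) (div_pos hδ (sub_pos.2 hlt))
  rw [div_mul_cancel₀] at h
  · linarith
  · exact (sub_pos.2 hlt).ne'
theorem stmt18 (N : ℕ) (hN : 0 < N)
    (K : (Fin N → ℝ) → Fin N → ℝ)
    (hcomp : ∀ x : Fin N → ℝ, (∀ m, 0 < x m) → ∀ i p : Fin N,
      (∀ m, x i ≤ x m) → (∀ m, x m ≤ x p) → 0 ≤ K x p - K x i)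
    (r : ℝ → Fin N → ℝ) (hpos : ∀ t, 0 ≤ t → ∀ i, 0 < r t i)
    (hflow : ∀ t, 0 ≤ t → ∀ i, HasDerivAt (fun s => r s i)
      (((∑ j, K (r t) j * r t j) / (∑ j, r t j) - K (r t) i) * r t i) t) :
    MonotoneOn (fun t => ⨅ p : Fin N, ⨅ q : Fin N, r t p / r t q) (Set.Ici (0:ℝ)) ∧
    ∃ c : ℝ, 1 < c ∧ ∀ t, 0 ≤ t → ∀ p q : Fin N,
      c⁻¹ * r t p ≤ r t q ∧ r t q ≤ c * r t p := by
  haveI : Nonempty (Fin N) := ⟨⟨0, hN⟩⟩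
  have hne : (Finset.univ : Finset (Fin N)).Nonempty := Finset.univ_nonempty
  have hMpos : ∀ t, 0 ≤ t → 0 < Finset.univ.sup' hne (r t) := fun t ht =>
    lt_of_lt_of_le (hpos t ht hne.choose) (Finset.le_sup' (r t) (Finset.mem_univ _))
  have hmpos : ∀ t, 0 ≤ t → 0 < Finset.univ.inf' hne (r t) := by
    intro t ht
    obtain ⟨p, -, hp⟩ := Finset.exists_mem_eq_inf' hne (r t)
    rw [hp]; exact hpos t ht p
  have hcore := aux_core N hne K hcomp r hpos hflow
  have hratio : ∀ u, 0 ≤ u → ∀ v, 0 ≤ v → u ≤ v →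
      Finset.univ.inf' hne (r u) / Finset.univ.sup' hne (r u) ≤
        Finset.univ.inf' hne (r v) / Finset.univ.sup' hne (r v) := by
    intro u hu v hv huv
    have h := hcore u v hu huv
    have e1 : Finset.univ.inf' hne (r u) / Finset.univ.sup' hne (r u)
        = Real.exp (Real.log (Finset.univ.inf' hne (r u))
          - Real.log (Finset.univ.sup' hne (r u))) := by
      rw [Real.exp_sub, Real.exp_log (hmpos u hu), Real.exp_log (hMpos u hu)]
    have e2 : Finset.univ.inf' hne (r v) / Finset.univ.sup' hne (r v)
        = Real.exp (Real.log (Finset.univ.inf' hne (r v))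
          - Real.log (Finset.univ.sup' hne (r v))) := by
      rw [Real.exp_sub, Real.exp_log (hmpos v hv), Real.exp_log (hMpos v hv)]
    rw [e1, e2]
    exact Real.exp_le_exp.2 (by linarith)
  have hF : ∀ u, 0 ≤ u → (⨅ p : Fin N, ⨅ q : Fin N, r u p / r u q)
      = Finset.univ.inf' hne (r u) / Finset.univ.sup' hne (r u) := by
    intro u hu
    apply le_antisymm
    · obtain ⟨p₀, -, hp₀⟩ := Finset.exists_mem_eq_inf' hne (r u)
      obtain ⟨q₀, -, hq₀⟩ := Finset.exists_mem_eq_sup' hne (r u)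
      rw [hp₀, hq₀]
      refine le_trans (ciInf_le (Set.finite_range _).bddBelow p₀) ?_
      exact ciInf_le (Set.finite_range _).bddBelow q₀
    · refine le_ciInf fun p => le_ciInf fun q => ?_
      rw [div_le_div_iff₀ (hMpos u hu) (hpos u hu q)]
      exact mul_le_mul (Finset.inf'_le (r u) (Finset.mem_univ p))
        (Finset.le_sup' (r u) (Finset.mem_univ q)) (hpos u hu q).le (hpos u hu p).le
  constructor
  · intro s hs t ht hst
    simp only
    rw [hF s hs, hF t ht]
    exact hratio s hs t ht hst
  · set c : ℝ := Real.exp (Real.log (Finset.univ.sup' hne (r 0))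
      - Real.log (Finset.univ.inf' hne (r 0))) + 1 with hc
    have hgap0 : 0 ≤ Real.log (Finset.univ.sup' hne (r 0))
        - Real.log (Finset.univ.inf' hne (r 0)) := by
      have hle : Finset.univ.inf' hne (r 0) ≤ Finset.univ.sup' hne (r 0) := by
        obtain ⟨p₀, -, hp₀⟩ := Finset.exists_mem_eq_inf' hne (r 0)
        rw [hp₀]
        exact Finset.le_sup' (r 0) (Finset.mem_univ p₀)
      have := Real.log_le_log (hmpos 0 le_rfl) hle
      linarith
    have hc1 : 1 < c := by
      have := Real.one_le_exp hgap0
      rw [hc]; linarith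
    have hc0 : 0 < c := lt_trans one_pos hc1
    refine ⟨c, hc1, ?_⟩
    have hkey : ∀ t, 0 ≤ t → ∀ p q : Fin N, r t q ≤ c * r t p := by
      intro t ht p q
      have h1 : r t q ≤ Finset.univ.sup' hne (r t) := Finset.le_sup' (r t) (Finset.mem_univ q)
      have h2 : Finset.univ.sup' hne (r t)
          = Real.exp (Real.log (Finset.univ.sup' hne (r t))
            - Real.log (Finset.univ.inf' hne (r t))) * Finset.univ.inf' hne (r t) := by
        rw [Real.exp_sub, Real.exp_log (hmpos t ht), Real.exp_log (hMpos t ht),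
          div_mul_cancel₀ _ (hmpos t ht).ne']
      have h3 := hcore 0 t le_rfl ht
      have h4 : Real.exp (Real.log (Finset.univ.sup' hne (r t))
            - Real.log (Finset.univ.inf' hne (r t)))
          ≤ Real.exp (Real.log (Finset.univ.sup' hne (r 0))
            - Real.log (Finset.univ.inf' hne (r 0))) := Real.exp_le_exp.2 h3
      have h5 : Finset.univ.inf' hne (r t) ≤ r t p := Finset.inf'_le (r t) (Finset.mem_univ p)
      have h6 : 0 < Finset.univ.inf' hne (r t) := hmpos t ht
      have h7 : 0 < Real.exp (Real.log (Finset.univ.sup' hne (r 0))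
            - Real.log (Finset.univ.inf' hne (r 0))) := Real.exp_pos _
      nlinarith [hpos t ht p]
    intro t ht p q
    refine ⟨?_, hkey t ht p q⟩
    rw [inv_mul_le_iff₀ hc0]
    exact hkey t ht q p
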